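/- Let 1 ≤ k₋ < k₊ be integers such that p := k₊+k₋ is an odd prime, let n ≥ 1 be an integer such that q := (k₊+k₋)n+1 is prime, and suppose there exists a splitting ℤ_q = (M,S) with multiplier set M = [-k₋,k₊]* = {m ∈ ℤ : -k₋ ≤ m ≤ k₊, m ≠ 0} and |S| = n. Then (k₊+k₋) divides n. -/

import Mathlib

set_option maxHeartbeats 1000000


/-- `(M, S)` is a splitting of `ℤ_q`: `M ⊆ ℤ \ {0}`, and the products `m·s`
(for `m ∈ M`, `s ∈ S`) are pairwise distinct and cover exactly the nonzero
elements of `ZMod q`. -/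
def IsSplitting (q : ℕ) (M : Finset ℤ) (S : Finset (ZMod q)) : Prop :=
  (0 : ℤ) ∉ M ∧
  Set.InjOn (fun p : ℤ × ZMod q => (p.1 : ZMod q) * p.2) ↑(M ×ˢ S) ∧
  (fun p : ℤ × ZMod q => (p.1 : ZMod q) * p.2) '' ↑(M ×ˢ S) = {a : ZMod q | a ≠ 0}

open Polynomial in
lemma cyclo_const {p : ℕ} (hp : p.Prime) {ζ : ℂ} (hζ : IsPrimitiveRoot ζ p)
    (c : ℕ → ℤ) (hsum : ∑ j ∈ Finset.range p, (c j : ℂ) * ζ ^ j = 0) :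
    ∀ j < p, c j = c 0 := by
  have hp1 : 1 < p := hp.one_lt
  set Q : ℚ[X] := ∑ j ∈ Finset.range p, C ((c j - c 0 : ℤ) : ℚ) * X ^ j with hQdef
  have hcoeff : ∀ k, Q.coeff k = if k ∈ Finset.range p then ((c k - c 0 : ℤ) : ℚ) else 0 := by
    intro k
    rw [hQdef, Polynomial.finset_sum_coeff]
    simp only [Polynomial.coeff_C_mul, Polynomial.coeff_X_pow, mul_ite, mul_one, mul_zero]
    rw [Finset.sum_ite_eq (Finset.range p) k fun j => ((c j - c 0 : ℤ) : ℚ)]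
  have haev : Polynomial.aeval ζ Q = 0 := by
    rw [hQdef, map_sum]
    simp only [map_mul, map_pow, Polynomial.aeval_C, Polynomial.aeval_X]
    have hc : ∀ j : ℕ, (algebraMap ℚ ℂ) ((c j - c 0 : ℤ) : ℚ) = (c j : ℂ) - (c 0 : ℂ) :=
      fun j => by rw [eq_ratCast]; push_cast; ring
    simp only [hc, sub_mul, Finset.sum_sub_distrib, hsum, zero_sub, neg_eq_zero,
      ← Finset.mul_sum]
    rw [hζ.geom_sum_eq_zero hp1, mul_zero]
  have hdvd : Polynomial.cyclotomic p ℚ ∣ Q := by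
    rw [Polynomial.cyclotomic_eq_minpoly_rat hζ hp.pos]
    exact minpoly.dvd ℚ ζ haev
  have hdegQ : Q.natDegree ≤ p - 1 := by
    rw [hQdef]
    refine Polynomial.natDegree_sum_le_of_forall_le _ _ fun j hj => ?_
    refine le_trans (Polynomial.natDegree_C_mul_le _ _) ?_
    simp only [Polynomial.natDegree_X_pow]
    have := Finset.mem_range.mp hj; omega
  have hQ0 : Q = 0 := by
    by_contra h0
    obtain ⟨R, hR⟩ := hdvd
    have hR0 : R ≠ 0 := by rintro rfl; rw [mul_zero] at hR; exact h0 hR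
    have hdeg : Q.natDegree = (p - 1) + R.natDegree := by
      rw [hR, Polynomial.natDegree_mul (Polynomial.cyclotomic_ne_zero p ℚ) hR0,
        Polynomial.natDegree_cyclotomic, Nat.totient_prime hp]
    have hRdeg : R.natDegree = 0 := by omega
    obtain ⟨a, ha⟩ := Polynomial.natDegree_eq_zero.mp hRdeg
    have hQ00 : Q.coeff 0 = 0 := by rw [hcoeff]; simp [hp.pos]
    rw [hR, ← ha, Polynomial.coeff_mul_C, Polynomial.cyclotomic_coeff_zero ℚ hp1,
      one_mul] at hQ00
    rw [← ha, hQ00, map_zero, mul_zero] at hR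
    exact h0 hR
  intro j hj
  have hcj := hcoeff j
  rw [hQ0, Polynomial.coeff_zero] at hcj
  simp only [Finset.mem_range, hj, if_true] at hcj
  exact_mod_cast sub_eq_zero.mp (by exact_mod_cast hcj.symm)

lemma sum_fiber {α : Type*} [DecidableEq α] (T : Finset α) (f : α → ℕ) (p : ℕ)
    (hf : ∀ x ∈ T, f x < p) (ζ : ℂ) :
    ∑ x ∈ T, ζ ^ (f x) =
      ∑ j ∈ Finset.range p, ((T.filter (fun x => f x = j)).card : ℂ) * ζ ^ j := by
  classical
  rw [← Finset.sum_fiberwise_of_maps_to (fun x hx => Finset.mem_range.mpr (hf x hx))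
    (fun x => ζ ^ f x)]
  refine Finset.sum_congr rfl fun j hj => ?_
  rw [Finset.sum_congr rfl (fun x hx => by rw [(Finset.mem_filter.mp hx).2]),
    Finset.sum_const, nsmul_eq_mul]

lemma fibers_eq {α : Type*} [DecidableEq α] {p : ℕ} (hp : p.Prime) {ζ : ℂ}
    (hζ : IsPrimitiveRoot ζ p) (T : Finset α) (f : α → ℕ) (hf : ∀ x ∈ T, f x < p)
    (h0 : ∑ x ∈ T, ζ ^ (f x) = 0) :
    ∀ j < p, (T.filter (fun x => f x = j)).card = (T.filter (fun x => f x = 0)).card := by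
  classical
  have key := cyclo_const hp hζ (fun j => ((T.filter (fun x => f x = j)).card : ℤ)) ?_
  · intro j hj; exact_mod_cast key j hj
  · push_cast
    rw [← sum_fiber T f p hf ζ]
    exact h0


noncomputable def indOf {q p : ℕ} [Fact q.Prime]
    (φ : (ZMod q)ˣ →* Multiplicative (ZMod p)) (a : ZMod q) : ℕ :=
  if h : a = 0 then 0 else (Multiplicative.toAdd (φ (Units.mk0 a h))).val

theorem stmt_6 (kp km n : ℕ) (hkm : 1 ≤ km) (hk : km < kp) (hn : 1 ≤ n)
    (hpodd : Odd (kp + km)) (hpprime : Nat.Prime (kp + km))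
    (hq : Nat.Prime ((kp + km) * n + 1))
    (S : Finset (ZMod ((kp + km) * n + 1)))
    (hsplit : IsSplitting ((kp + km) * n + 1)
        ((Finset.Icc (-(km : ℤ)) (kp : ℤ)).erase 0) S)
    (hcard : S.card = n) :
    (kp + km) ∣ n := by
  classical
  obtain ⟨hM0, hinj, himg⟩ := hsplit
  set M : Finset ℤ := (Finset.Icc (-(km : ℤ)) (kp : ℤ)).erase 0 with hMdef
  have hp1 : 1 < kp + km := hpprime.one_lt
  haveI hqF : Fact ((kp + km) * n + 1).Prime := ⟨hq⟩
  haveI hpF : Fact (kp + km).Prime := ⟨hpprime⟩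
  haveI : NeZero (kp + km) := ⟨hpprime.pos.ne'⟩
  -- membership facts
  have h1M : (1 : ℤ) ∈ M := by
    rw [hMdef, Finset.mem_erase, Finset.mem_Icc]
    exact ⟨one_ne_zero, by push_cast; omega, by push_cast; omega⟩
  have hm1M : (-1 : ℤ) ∈ M := by
    rw [hMdef, Finset.mem_erase, Finset.mem_Icc]
    exact ⟨by norm_num, by push_cast; omega, by push_cast; omega⟩
  have hSne : S.Nonempty := Finset.card_pos.mp (by omega)
  have hMS : ∀ m ∈ M, ∀ s ∈ S, ((m : ZMod ((kp + km) * n + 1)) * s) ≠ 0 := by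
    intro m hm s hs
    have hmem : ((m : ZMod ((kp + km) * n + 1)) * s) ∈
        {a : ZMod ((kp + km) * n + 1) | a ≠ 0} := by
      rw [← himg]
      exact ⟨(m, s), by simp [Finset.mem_product, hm, hs], rfl⟩
    exact hmem
  have hS0 : ∀ s ∈ S, s ≠ 0 := by
    intro s hs
    have := hMS 1 h1M s hs
    simpa using this
  have hMne : ∀ m ∈ M, (m : ZMod ((kp + km) * n + 1)) ≠ 0 := by
    intro m hm h
    obtain ⟨s, hs⟩ := hSne
    exact hMS m hm s hs (by rw [h, zero_mul])
  -- the character φ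
  have hcyc : IsCyclic (ZMod ((kp + km) * n + 1))ˣ := inferInstance
  have hcardU : Nat.card (ZMod ((kp + km) * n + 1))ˣ = (kp + km) * n := by
    rw [Nat.card_eq_fintype_card, ZMod.card_units]; omega
  have hdvdU : (kp + km) ∣ Nat.card (ZMod ((kp + km) * n + 1))ˣ := by
    rw [hcardU]; exact dvd_mul_right _ n
  set φ : (ZMod ((kp + km) * n + 1))ˣ →* Multiplicative (ZMod (kp + km)) :=
    (AddMonoidHom.toMultiplicative (ZMod.castHom hdvdU (ZMod (kp + km))).toAddMonoidHom).comp
      (zmodCyclicMulEquiv hcyc).symm.toMonoidHom with hφdef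
  have hφsurj : Function.Surjective φ := by
    rw [hφdef, MonoidHom.coe_comp]
    refine Function.Surjective.comp ?_ (zmodCyclicMulEquiv hcyc).symm.surjective
    intro x
    obtain ⟨k, hk⟩ := ZMod.natCast_zmod_surjective (n := kp + km) (Multiplicative.toAdd x)
    refine ⟨Multiplicative.ofAdd ((k : ZMod (Nat.card (ZMod ((kp + km) * n + 1))ˣ))), ?_⟩
    simp only [AddMonoidHom.toMultiplicative_apply_apply, toAdd_ofAdd,
      RingHom.toAddMonoidHom_eq_coe, AddMonoidHom.coe_coe, map_natCast]
    rw [hk, ofAdd_toAdd]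
  -- root of unity and character ψ
  have hpne0 : (kp + km : ℕ) ≠ 0 := hpprime.pos.ne'
  obtain ⟨ζ, hζ⟩ : ∃ z : ℂ, IsPrimitiveRoot z (kp + km) :=
    ⟨_, Complex.isPrimitiveRoot_exp _ hpne0⟩
  have hζunit : IsUnit ζ := hζ.isUnit hpne0
  set ζu : ℂˣ := hζunit.unit with hζudef
  have hζucoe : (ζu : ℂ) = ζ := hζunit.unit_spec
  have hζup : ζu ^ (kp + km) = 1 := by
    apply Units.ext
    rw [Units.val_pow_eq_pow_val, hζucoe, hζ.pow_eq_one, Units.val_one]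
  set e : Multiplicative (ZMod (kp + km)) →* ℂˣ :=
    { toFun := fun x => ζu ^ (Multiplicative.toAdd x).val,
      map_one' := by simp,
      map_mul' := by
        intro x y
        simp only [toAdd_mul, ZMod.val_add]
        rw [← pow_eq_pow_mod _ hζup, pow_add] } with hedef
  set ψ : MulChar (ZMod ((kp + km) * n + 1)) ℂ := MulChar.ofUnitHom (e.comp φ) with hψdef
  have hψu : ∀ u : (ZMod ((kp + km) * n + 1))ˣ,
      ψ (u : ZMod ((kp + km) * n + 1)) = ζ ^ ((Multiplicative.toAdd (φ u)).val) := by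
    intro u
    rw [hψdef, MulChar.ofUnitHom_coe]
    simp only [MonoidHom.comp_apply, hedef, MonoidHom.coe_mk, OneHom.coe_mk]
    rw [Units.val_pow_eq_pow_val, hζucoe]
  have hψidx : ∀ a, a ≠ 0 → ψ a = ζ ^ indOf φ a := by
    intro a ha
    have h2 := hψu (Units.mk0 a ha)
    rw [Units.val_mk0] at h2
    rw [h2, indOf, dif_neg ha]
  have hidxlt : ∀ a : ZMod ((kp + km) * n + 1), a ≠ 0 → indOf φ a < kp + km := by
    intro a ha
    rw [indOf, dif_neg ha]
    exact ZMod.val_lt _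
  -- ψ is nontrivial
  have hψne : ψ ≠ 1 := by
    obtain ⟨u, hu⟩ := hφsurj (Multiplicative.ofAdd (1 : ZMod (kp + km)))
    intro h
    have h1 := hψu u
    rw [h, hu, MulChar.one_apply_coe, toAdd_ofAdd, ZMod.val_one _, pow_one] at h1
    exact hζ.ne_one hp1 h1.symm
  have hsum_univ : ∑ a : ZMod ((kp + km) * n + 1), ψ a = 0 :=
    MulChar.sum_eq_zero_of_ne_one hψne
  have hψ0 : ψ (0 : ZMod ((kp + km) * n + 1)) = 0 := ψ.map_nonunit (by simp)
  have himgF : (M ×ˢ S).image (fun pr : ℤ × ZMod ((kp + km) * n + 1) =>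
      (pr.1 : ZMod ((kp + km) * n + 1)) * pr.2) = Finset.univ.erase 0 := by
    apply Finset.coe_injective
    rw [Finset.coe_image, himg, Finset.coe_erase, Finset.coe_univ]
    ext a
    simp
  have hAB : (∑ m ∈ M, ψ (m : ZMod ((kp + km) * n + 1))) * (∑ s ∈ S, ψ s) = 0 := by
    rw [Finset.sum_mul_sum]
    have step1 : ∑ m ∈ M, ∑ s ∈ S, ψ (m : ZMod ((kp + km) * n + 1)) * ψ s
        = ∑ pr ∈ M ×ˢ S, ψ ((pr.1 : ZMod ((kp + km) * n + 1)) * pr.2) := by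
      rw [Finset.sum_product]
      simp only [map_mul]
    have step2 : ∑ pr ∈ M ×ˢ S, ψ ((pr.1 : ZMod ((kp + km) * n + 1)) * pr.2)
        = ∑ a ∈ Finset.univ.erase (0 : ZMod ((kp + km) * n + 1)), ψ a := by
      rw [← himgF]
      rw [Finset.sum_image (fun x hx y hy h => hinj (Finset.mem_coe.mpr hx)
        (Finset.mem_coe.mpr hy) h)]
    rw [step1, step2]
    have step3 := Finset.add_sum_erase Finset.univ ψ
      (Finset.mem_univ (0 : ZMod ((kp + km) * n + 1)))
    rw [hsum_univ, hψ0, zero_add] at step3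
    exact step3
  rcases mul_eq_zero.mp hAB with hA0 | hB0
  · -- case A = 0 : contradiction
    exfalso
    have hMzeta : ∑ m ∈ M, ζ ^ (indOf φ ((m : ZMod ((kp + km) * n + 1)))) = 0 := by
      calc ∑ m ∈ M, ζ ^ (indOf φ ((m : ZMod ((kp + km) * n + 1))))
          = ∑ m ∈ M, ψ (m : ZMod ((kp + km) * n + 1)) :=
            Finset.sum_congr rfl fun m hm => (hψidx _ (hMne m hm)).symm
        _ = 0 := hA0
    have hflt : ∀ m ∈ M, indOf φ ((m : ZMod ((kp + km) * n + 1))) < kp + km :=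
      fun m hm => hidxlt _ (hMne m hm)
    have hfib := fibers_eq hpprime hζ M
      (fun m => indOf φ ((m : ZMod ((kp + km) * n + 1)))) hflt hMzeta
    have hMcard : M.card = kp + km := by
      rw [hMdef, Finset.card_erase_of_mem (by rw [Finset.mem_Icc]; omega), Int.card_Icc]
      have hcst : (kp : ℤ) + 1 - -(km : ℤ) = ((kp + km + 1 : ℕ) : ℤ) := by push_cast; ring
      rw [hcst, Int.toNat_natCast]
      omega
    have hsumcard : M.card = ∑ j ∈ Finset.range (kp + km),
        (M.filter (fun m : ℤ => indOf φ ((m : ZMod ((kp + km) * n + 1))) = j)).card :=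
      Finset.card_eq_sum_card_fiberwise fun m hm => Finset.mem_range.mpr (hflt m hm)
    rw [Finset.sum_congr rfl (fun j hj => hfib j (Finset.mem_range.mp hj)),
      Finset.sum_const, Finset.card_range, smul_eq_mul, hMcard] at hsumcard
    have ha0 : (M.filter
        (fun m : ℤ => indOf φ ((m : ZMod ((kp + km) * n + 1))) = 0)).card = 1 :=
      Nat.eq_of_mul_eq_mul_left hpprime.pos (by rw [mul_one]; exact hsumcard.symm)
    -- but both 1 and -1 are in the fiber of 0
    have hf1 : indOf φ (((1 : ℤ) : ZMod ((kp + km) * n + 1))) = 0 := by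
      rw [Int.cast_one, indOf, dif_neg one_ne_zero, Units.mk0_one, map_one, toAdd_one,
        ZMod.val_zero]
    have hne1 : ((-1 : ℤ) : ZMod ((kp + km) * n + 1)) ≠ 0 := by
      rw [Int.cast_neg, Int.cast_one]
      exact neg_ne_zero.mpr one_ne_zero
    have hfm1 : indOf φ (((-1 : ℤ) : ZMod ((kp + km) * n + 1))) = 0 := by
      rw [indOf, dif_neg hne1]
      set u : (ZMod ((kp + km) * n + 1))ˣ := Units.mk0 _ hne1 with hudef
      have hu2 : u * u = 1 := by
        apply Units.ext
        rw [Units.val_mul, hudef, Units.val_mk0, Units.val_one]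
        push_cast
        ring
      have hφu2 : φ u * φ u = 1 := by rw [← map_mul, hu2, map_one]
      have hadd : Multiplicative.toAdd (φ u) + Multiplicative.toAdd (φ u) = 0 := by
        rw [← toAdd_mul, hφu2, toAdd_one]
      have h2x : (2 : ZMod (kp + km)) * Multiplicative.toAdd (φ u) = 0 := by
        rw [two_mul]; exact hadd
      have h2ne : (2 : ZMod (kp + km)) ≠ 0 := by
        intro h2
        have h2' : ((2 : ℕ) : ZMod (kp + km)) = 0 := by exact_mod_cast h2
        have hdvd2 := (ZMod.natCast_eq_zero_iff 2 (kp + km)).mp h2'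
        have := Nat.le_of_dvd two_pos hdvd2
        have := Nat.odd_iff.mp hpodd
        omega
      have hx0 : Multiplicative.toAdd (φ u) = 0 :=
        (mul_eq_zero.mp h2x).resolve_left h2ne
      rw [hx0, ZMod.val_zero]
    have hsub : ({-1, 1} : Finset ℤ) ⊆ M.filter
        (fun m : ℤ => indOf φ ((m : ZMod ((kp + km) * n + 1))) = 0) := by
      intro x hx
      rcases Finset.mem_insert.mp hx with rfl | hx
      · exact Finset.mem_filter.mpr ⟨hm1M, hfm1⟩
      · rw [Finset.mem_singleton] at hx
        subst hx
        exact Finset.mem_filter.mpr ⟨h1M, hf1⟩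
    have hcard2 : ({-1, 1} : Finset ℤ).card = 2 := by decide
    have := Finset.card_le_card hsub
    omega
  · -- case B = 0 : p ∣ n
    have hSzeta : ∑ s ∈ S, ζ ^ (indOf φ s) = 0 := by
      calc ∑ s ∈ S, ζ ^ (indOf φ s)
          = ∑ s ∈ S, ψ s := Finset.sum_congr rfl fun s hs => (hψidx _ (hS0 s hs)).symm
        _ = 0 := hB0
    have hflt : ∀ s ∈ S, indOf φ s < kp + km := fun s hs => hidxlt _ (hS0 s hs)
    have hfib := fibers_eq hpprime hζ S (fun s => indOf φ s) hflt hSzeta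
    have hsumcard : S.card = ∑ j ∈ Finset.range (kp + km),
        (S.filter (fun s => indOf φ s = j)).card :=
      Finset.card_eq_sum_card_fiberwise fun s hs => Finset.mem_range.mpr (hflt s hs)
    rw [hcard, Finset.sum_congr rfl (fun j hj => hfib j (Finset.mem_range.mp hj)),
      Finset.sum_const, Finset.card_range, smul_eq_mul] at hsumcard
    exact ⟨_, hsumcard⟩
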